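/- Consider the principal-agent model with a risk-neutral agent under limited liability. If an action a ∈ {1,...,n} is implementable (i.e., w_a ≥ max{w_1, 0}), then an action-transfer pair (a,s) is implementable if and only if s lies in the interval [c_a, r_a − max{w_1, 0}]. -/

import Mathlib

open Finset

/-- Expected transfer at action `a` (zero for the default action `0`). -/
noncomputable def expT {n k : ℕ} (I : Fin (n + 1) → Fin k → ℝ) (t : Fin k → ℝ)
    (a : Fin (n + 1)) : ℝ :=
  if a = 0 then 0 else ∑ j, I a j * t j

/-- Risk-neutral agent's utility at action `a`. -/
noncomputable def uA {n k : ℕ} (c : Fin (n + 1) → ℝ) (I : Fin (n + 1) → Fin k → ℝ)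
    (t : Fin k → ℝ) (a : Fin (n + 1)) : ℝ :=
  expT I t a - c a

/-- Principal's utility at action `a`. -/
noncomputable def uP {n k : ℕ} (r : Fin (n + 1) → ℝ) (I : Fin (n + 1) → Fin k → ℝ)
    (t : Fin k → ℝ) (a : Fin (n + 1)) : ℝ :=
  r a - expT I t a

/-- `I` is an information structure: each non-default row is a distribution over signals. -/
def Stochastic {n k : ℕ} (I : Fin (n + 1) → Fin k → ℝ) : Prop :=
  ∀ a : Fin (n + 1), a ≠ 0 → (∀ j, 0 ≤ I a j) ∧ ∑ j, I a j = 1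

/-- `a` is an equilibrium action for the contract `t`: it maximizes the agent's utility
and, among the agent's optimal actions, maximizes the principal's utility
(ties are broken in the principal's favor). -/
def IsEquilibrium {n k : ℕ} (r c : Fin (n + 1) → ℝ) (I : Fin (n + 1) → Fin k → ℝ)
    (t : Fin k → ℝ) (a : Fin (n + 1)) : Prop :=
  (∀ b, uA c I t b ≤ uA c I t a) ∧
    ∀ b, uA c I t b = uA c I t a → uP r I t b ≤ uP r I t a

/-- `t` is an optimal limited-liability contract for `I`, with equilibrium action `a`:
its equilibrium principal's utility is at least that of any other limited-liability
contract. -/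
def OptimalAt {n k : ℕ} (r c : Fin (n + 1) → ℝ) (I : Fin (n + 1) → Fin k → ℝ)
    (t : Fin k → ℝ) (a : Fin (n + 1)) : Prop :=
  (∀ j, 0 ≤ t j) ∧ IsEquilibrium r c I t a ∧
    ∀ (t' : Fin k → ℝ) (a' : Fin (n + 1)), (∀ j, 0 ≤ t' j) →
      IsEquilibrium r c I t' a' → uP r I t' a' ≤ uP r I t a

/-- The utility profile `(x, y)` is implementable by some information structure
together with an optimal contract for it. -/
def ImplementsProfile {n : ℕ} (r c : Fin (n + 1) → ℝ) (x y : ℝ) : Prop :=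
  ∃ (k : ℕ) (_ : 0 < k) (I : Fin (n + 1) → Fin k → ℝ) (t : Fin k → ℝ) (a : Fin (n + 1)),
    Stochastic I ∧ OptimalAt r c I t a ∧ uP r I t a = x ∧ uA c I t a = y

/-- The action `a` is implementable. -/
def ImplementsAction {n : ℕ} (r c : Fin (n + 1) → ℝ) (a : Fin (n + 1)) : Prop :=
  ∃ (k : ℕ) (_ : 0 < k) (I : Fin (n + 1) → Fin k → ℝ) (t : Fin k → ℝ),
    Stochastic I ∧ OptimalAt r c I t a

/-- The action-transfer pair `(a, s)` is implementable. -/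
def ImplementsPair {n : ℕ} (r c : Fin (n + 1) → ℝ) (a : Fin (n + 1)) (s : ℝ) : Prop :=
  ∃ (k : ℕ) (_ : 0 < k) (I : Fin (n + 1) → Fin k → ℝ) (t : Fin k → ℝ),
    Stochastic I ∧ OptimalAt r c I t a ∧ expT I t a = s

/-- In the principal-agent model with a risk-neutral agent under limited
liability, if an action $a \in \{1,\dots,n\}$ is implementable (i.e.
$w_a \ge \max\{w_1,0\}$), then the action-transfer pair $(a,s)$ is implementable if and
only if $s \in [c_a, r_a - \max\{w_1, 0\}]$. -/
theorem implementable_pair_iff_risk_neutral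
    (n : ℕ) (hn : 1 ≤ n) (r c : Fin (n + 1) → ℝ)
    (hr0 : r 0 = 0) (hc0 : c 0 = 0)
    (hr_nonneg : ∀ a, 0 ≤ r a)
    (hc_pos : ∀ a : Fin (n + 1), a ≠ 0 → 0 < c a)
    (hc1_min : ∀ a : Fin (n + 1), a ≠ 0 → c 1 ≤ c a)
    (hr1_max : ∀ a : Fin (n + 1), a ≠ 0 → c a = c 1 → r a ≤ r 1)
    (a : Fin (n + 1)) (ha : a ≠ 0)
    (ha_impl : max (r 1 - c 1) 0 ≤ r a - c a) (s : ℝ) :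
    ImplementsPair r c a s ↔ c a ≤ s ∧ s ≤ r a - max (r 1 - c 1) 0 := by
  have h1ne : (1 : Fin (n + 1)) ≠ 0 := by
    intro h
    have := congrArg Fin.val h
    rw [Fin.val_one', Nat.mod_eq_of_lt (by omega : 1 < n + 1)] at this
    simp at this
  have hc1pos : 0 < c 1 := hc_pos 1 h1ne
  have hw1M : r 1 - c 1 ≤ max (r 1 - c 1) 0 := le_max_left _ _
  have hM0 : (0 : ℝ) ≤ max (r 1 - c 1) 0 := le_max_right _ _
  have hwa : r 1 - c 1 ≤ r a - c a := le_trans hw1M ha_impl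
  constructor
  · rintro ⟨k, hk, I, t, hI, ⟨htnn, ⟨hIC, hTB⟩, hopt⟩, hsval⟩
    have hexpT0 : expT I t (0 : Fin (n + 1)) = 0 := by simp [expT]
    have hcale : c a ≤ s := by
      have h0 := hIC 0
      simp only [uA, hexpT0, hc0, hsval] at h0
      linarith
    refine ⟨hcale, ?_⟩
    have hT' : ∀ b : Fin (n + 1), b ≠ 0 → expT I (fun _ => c 1) b = c 1 := by
      intro b hb
      rw [expT, if_neg hb]
      have h2 : (∑ j, I b j * (fun _ => c 1) j) = (∑ j, I b j) * c 1 := by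
        rw [Finset.sum_mul]
      rw [h2, (hI b hb).2, one_mul]
    have hT0' : expT I (fun _ => c 1) (0 : Fin (n + 1)) = 0 := by simp [expT]
    by_cases h1 : 0 ≤ r 1 - c 1
    · have hE : IsEquilibrium r c I (fun _ => c 1) 1 := by
        constructor
        · intro b
          by_cases hb : b = 0
          · subst hb
            simp only [uA, hT0', hT' 1 h1ne, hc0]
            linarith
          · simp only [uA, hT' b hb, hT' 1 h1ne]
            have := hc1_min b hb
            linarith
        · intro b hb
          by_cases hb0 : b = 0
          · subst hb0
            simp only [uP, hT0', hT' 1 h1ne, hr0]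
            linarith
          · simp only [uA, hT' b hb0, hT' 1 h1ne] at hb
            have hcb : c b = c 1 := by linarith
            have := hr1_max b hb0 hcb
            simp only [uP, hT' b hb0, hT' 1 h1ne]
            linarith
      have hle := hopt (fun _ => c 1) 1 (fun _ => hc1pos.le) hE
      simp only [uP, hT' 1 h1ne, hsval] at hle
      have hmax : max (r 1 - c 1) 0 = r 1 - c 1 := max_eq_left h1
      rw [hmax]
      linarith
    · push_neg at h1
      have hE : IsEquilibrium r c I (fun _ => c 1) 0 := by
        constructor
        · intro b
          by_cases hb : b = 0
          · subst hb; exact le_refl _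
          · simp only [uA, hT' b hb, hT0', hc0]
            have := hc1_min b hb
            linarith
        · intro b hb
          by_cases hb0 : b = 0
          · subst hb0; exact le_refl _
          · simp only [uA, hT' b hb0, hT0', hc0] at hb
            have hcb : c b = c 1 := by linarith
            have := hr1_max b hb0 hcb
            simp only [uP, hT' b hb0, hT0', hr0]
            linarith
      have hle := hopt (fun _ => c 1) 0 (fun _ => hc1pos.le) hE
      simp only [uP, hT0', hr0, hsval] at hle
      have hmax : max (r 1 - c 1) 0 = 0 := max_eq_right h1.le
      rw [hmax]
      linarith
  · rintro ⟨hs1, hs2⟩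
    have hca : 0 < c a := hc_pos a ha
    have hc1a : c 1 ≤ c a := hc1_min a ha
    have hs0 : 0 < s := lt_of_lt_of_le hca hs1
    set α : ℝ := 1 - (c a - c 1) / s with hαdef
    have hαs : (1 - α) * s = c a - c 1 := by
      rw [hαdef]
      field_simp
      ring
    have hαs' : α * s = s - (c a - c 1) := by linarith [hαs]
    have hα0 : 0 ≤ α := by
      rw [hαdef]
      have : (c a - c 1) / s ≤ 1 := (div_le_one hs0).mpr (by linarith)
      linarith
    have hα1 : α ≤ 1 := by
      rw [hαdef]
      have : 0 ≤ (c a - c 1) / s := div_nonneg (by linarith) hs0.le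
      linarith
    have hcc : c a = c 1 → s = c a := by
      intro h
      have hr1a : r a ≤ r 1 := hr1_max a ha h
      have h0w : 0 ≤ r 1 - c 1 := by
        have h2 := le_trans (le_max_right _ _) ha_impl
        linarith
      have hmax : max (r 1 - c 1) 0 = r 1 - c 1 := max_eq_left h0w
      rw [hmax] at hs2
      linarith
    have hET : ∀ (t' : Fin 2 → ℝ) (b : Fin (n + 1)), b ≠ 0 →
        expT (fun b j => if b = a then (if j = 0 then (1 : ℝ) else 0)
            else (if j = 0 then α else 1 - α)) t' b
          = if b = a then t' 0 else α * t' 0 + (1 - α) * t' 1 := by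
      intro t' b hb
      rw [expT, if_neg hb, Fin.sum_univ_two]
      by_cases hba : b = a <;> simp [hba]
    have hET0 : ∀ (t' : Fin 2 → ℝ),
        expT (fun b j => if b = a then (if j = 0 then (1 : ℝ) else 0)
            else (if j = 0 then α else 1 - α)) t' (0 : Fin (n + 1)) = 0 := by
      intro t'; simp [expT]
    have hETt : ∀ (b : Fin (n + 1)), b ≠ 0 →
        expT (fun b j => if b = a then (if j = 0 then (1 : ℝ) else 0)
            else (if j = 0 then α else 1 - α)) (fun j : Fin 2 => if j = 0 then s else 0) b
          = if b = a then s else α * s := by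
      intro b hb
      rw [hET _ b hb]
      by_cases hba : b = a <;> simp [hba]
    refine ⟨2, by norm_num,
      fun b j => if b = a then (if j = 0 then (1 : ℝ) else 0)
        else (if j = 0 then α else 1 - α),
      fun j => if j = 0 then s else 0, ?_, ?_, ?_⟩
    · -- Stochastic
      intro b hb
      constructor
      · intro j
        dsimp only
        split_ifs <;> linarith
      · rw [Fin.sum_univ_two]
        by_cases hba : b = a <;> simp [hba]
    · -- OptimalAt
      refine ⟨?_, ⟨?_, ?_⟩, ?_⟩
      · intro j
        dsimp only
        split_ifs <;> linarith
      · -- agent's IC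
        intro b
        simp only [uA]
        rw [hETt a ha, if_pos rfl]
        by_cases hb0 : b = 0
        · subst hb0
          rw [hET0, hc0]
          linarith
        · rw [hETt b hb0]
          by_cases hba : b = a
          · rw [if_pos hba, hba]
          · rw [if_neg hba]
            have := hc1_min b hb0
            linarith [hαs']
      · -- tie-breaking
        intro b hb
        simp only [uA, uP] at hb ⊢
        rw [hETt a ha, if_pos rfl] at hb ⊢
        by_cases hb0 : b = 0
        · subst hb0
          rw [hET0, hc0] at hb
          rw [hET0, hr0]
          linarith
        · rw [hETt b hb0] at hb ⊢
          by_cases hba : b = a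
          · rw [if_pos hba, hba] at hb ⊢
          · rw [if_neg hba] at hb ⊢
            have hcb : c b = c 1 := by linarith [hαs']
            have := hr1_max b hb0 hcb
            linarith [hαs']
      · -- optimality
        intro t' a' ht' hE'
        obtain ⟨hIC', hTB'⟩ := hE'
        simp only [uP]
        rw [hETt a ha, if_pos rfl]
        have h00 := hIC' 0
        simp only [uA] at h00
        rw [hET0, hc0] at h00
        by_cases h0' : a' = 0
        · subst h0'
          rw [hET0, hr0]
          linarith
        · rw [hET _ a' h0'] at h00 ⊢
          by_cases ha' : a' = a
          · rw [if_pos ha'] at h00 ⊢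
            rw [ha'] at h00 ⊢
            by_cases hcc1 : c a = c 1
            · have := hcc hcc1
              linarith
            · have hclt : c 1 < c a := lt_of_le_of_ne hc1a (Ne.symm hcc1)
              have ha1 : (1 : Fin (n + 1)) ≠ a := fun h => hcc1 (by rw [← h])
              have h1 := hIC' 1
              simp only [uA] at h1
              rw [hET _ 1 h1ne, if_neg ha1, hET _ a' h0', if_pos ha', ha'] at h1
              have h1α : 0 < 1 - α := by
                have : 0 < (c a - c 1) / s := div_pos (by linarith) hs0
                rw [hαdef]; linarith
              have hx : (1 - α) * s ≤ (1 - α) * t' 0 := by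
                nlinarith [mul_nonneg h1α.le (ht' 1)]
              have hxs : s ≤ t' 0 := le_of_mul_le_mul_left hx h1α
              linarith
          · rw [if_neg ha'] at h00 ⊢
            have hc1' : c a' ≤ c 1 := by
              have h1 := hIC' 1
              simp only [uA] at h1
              rw [hET _ 1 h1ne, hET _ a' h0', if_neg ha'] at h1
              by_cases ha1 : (1 : Fin (n + 1)) = a
              · rw [if_pos ha1] at h1
                have hcc1 : c a = c 1 := by rw [← ha1]
                have hαeq : α = 1 := by
                  have h2 : (1 - α) * s = 0 := by rw [hαs, hcc1]; ring
                  rcases mul_eq_zero.mp h2 with h3 | h3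
                  · linarith
                  · exact absurd h3 hs0.ne'
                rw [hαeq] at h1
                nlinarith
              · rw [if_neg ha1] at h1
                linarith
            have hc1'' : c a' = c 1 := le_antisymm hc1' (hc1_min a' h0')
            have hra' : r a' ≤ r 1 := hr1_max a' h0' hc1''
            have := hc1_min a' h0'
            linarith
    · rw [hETt a ha]
      exact if_pos rfl
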